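/- arXiv:0805.3777 — 3 statements merged into one kernel-verified Lean document; each statement's English description precedes it below -/
import Mathlib

section
/- Let F be a field and let T be a 3-tensor in F^{m1×m2×m3} with slices T_1,...,T_{m3} ∈ F^{m1×m2} (where (T_k)_{ij} = t_{ijk}). Then the rank of T (the minimal number of rank-one tensors summing to T) equals the minimal dimension of a subspace of F^{m1×m2} that is spanned by rank-one matrices and contains span(T_1,...,T_{m3}). -/
open scoped BigOperators

/-- The rank of a 3-tensor: the minimal number of rank-one tensors summing to it. -/
noncomputable def trank {F : Type*} [Field F] {m1 m2 m3 : ℕ}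
    (T : Fin m1 → Fin m2 → Fin m3 → F) : ℕ :=
  sInf {k | ∃ (x : Fin k → Fin m1 → F) (y : Fin k → Fin m2 → F) (z : Fin k → Fin m3 → F),
    ∀ i j l, T i j l = ∑ s, x s i * y s j * z s l}

/-- A rank-one matrix `x yᵀ` with `x, y` nonzero. -/
def IsRankOneMat {F : Type*} [Field F] {m n : ℕ} (A : Matrix (Fin m) (Fin n) F) : Prop :=
  ∃ (x : Fin m → F) (y : Fin n → F), x ≠ 0 ∧ y ≠ 0 ∧ A = Matrix.of fun i j => x i * y j

section Aux

variable {F : Type*} [Field F] {m1 m2 m3 : ℕ}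

/-- Every tensor admits some decomposition. -/
lemma trank_set_nonempty (T : Fin m1 → Fin m2 → Fin m3 → F) :
    {k | ∃ (x : Fin k → Fin m1 → F) (y : Fin k → Fin m2 → F) (z : Fin k → Fin m3 → F),
      ∀ i j l, T i j l = ∑ s, x s i * y s j * z s l}.Nonempty := by
  classical
  refine ⟨Fintype.card (Fin m1 × Fin m2 × Fin m3), ?_⟩
  set e := (Fintype.equivFin (Fin m1 × Fin m2 × Fin m3)).symm
  refine ⟨fun s i => if i = (e s).1 then T (e s).1 (e s).2.1 (e s).2.2 else 0,
    fun s j => if j = (e s).2.1 then 1 else 0,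
    fun s l => if l = (e s).2.2 then 1 else 0, fun i j l => ?_⟩
  rw [← Equiv.sum_comp e.symm
    (fun s => (if i = (e s).1 then T (e s).1 (e s).2.1 (e s).2.2 else 0) *
      (if j = (e s).2.1 then 1 else 0) * (if l = (e s).2.2 then 1 else 0))]
  simp only [Equiv.symm_apply_apply, e, Equiv.symm_symm]
  rw [Fintype.sum_prod_type]
  simp [Finset.sum_ite_eq', eq_comm, Fintype.sum_prod_type]

/-- From a `k`-term decomposition, produce a rank-one-spanned space of dim `≤ k`
containing the slices. -/
lemma dir1 (T : Fin m1 → Fin m2 → Fin m3 → F) {k : ℕ}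
    (x : Fin k → Fin m1 → F) (y : Fin k → Fin m2 → F) (z : Fin k → Fin m3 → F)
    (hT : ∀ i j l, T i j l = ∑ s, x s i * y s j * z s l) :
    ∃ d ≤ k, ∃ (S : Set (Matrix (Fin m1) (Fin m2) F)),
      (∀ A ∈ S, IsRankOneMat A) ∧
      Submodule.span F
        (Set.range fun l : Fin m3 => (Matrix.of fun i j => T i j l : Matrix (Fin m1) (Fin m2) F))
        ≤ Submodule.span F S ∧
      Module.finrank F (Submodule.span F S) = d := by
  classical
  set M : Fin k → Matrix (Fin m1) (Fin m2) F := fun s => Matrix.of fun i j => x s i * y s j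
  set S : Set (Matrix (Fin m1) (Fin m2) F) :=
    {A | ∃ s : Fin k, x s ≠ 0 ∧ y s ≠ 0 ∧ A = M s}
  have hS1 : ∀ A ∈ S, IsRankOneMat A := by
    rintro A ⟨s, hx, hy, rfl⟩
    exact ⟨x s, y s, hx, hy, rfl⟩
  have hMs : ∀ s, M s ∈ Submodule.span F S := by
    intro s
    by_cases hx : x s = 0
    · have : M s = 0 := by
        ext i j; simp [M, hx]
      rw [this]; exact Submodule.zero_mem _
    by_cases hy : y s = 0
    · have : M s = 0 := by
        ext i j; simp [M, hy]
      rw [this]; exact Submodule.zero_mem _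
    · exact Submodule.subset_span ⟨s, hx, hy, rfl⟩
  have hslice : ∀ l : Fin m3,
      (Matrix.of fun i j => T i j l : Matrix (Fin m1) (Fin m2) F) = ∑ s, z s l • M s := by
    intro l
    ext i j
    simp only [Matrix.of_apply, Finset.sum_apply, Matrix.sum_apply, Matrix.smul_apply,
      smul_eq_mul, M]
    rw [hT]
    exact Finset.sum_congr rfl fun s _ => by ring
  have hspan : Submodule.span F
      (Set.range fun l : Fin m3 => (Matrix.of fun i j => T i j l : Matrix (Fin m1) (Fin m2) F))
      ≤ Submodule.span F S := by
    rw [Submodule.span_le]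
    rintro _ ⟨l, rfl⟩
    dsimp only
    rw [hslice l]
    exact Submodule.sum_mem _ fun s _ => Submodule.smul_mem _ _ (hMs s)
  refine ⟨Module.finrank F (Submodule.span F S), ?_, S, hS1, hspan, rfl⟩
  have hSsub : Submodule.span F S ≤ Submodule.span F (Set.range M) := by
    rw [Submodule.span_le]
    rintro _ ⟨s, hx, hy, rfl⟩
    exact Submodule.subset_span ⟨s, rfl⟩
  calc Module.finrank F (Submodule.span F S)
      ≤ Module.finrank F (Submodule.span F (Set.range M)) := Submodule.finrank_mono hSsub
    _ ≤ Fintype.card (Fin k) := finrank_range_le_card M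
    _ = k := Fintype.card_fin k

/-- From a rank-one-spanned space of dim `d` containing the slices, produce a
`d`-term decomposition. -/
lemma dir2 (T : Fin m1 → Fin m2 → Fin m3 → F) {d : ℕ}
    (S : Set (Matrix (Fin m1) (Fin m2) F))
    (hS1 : ∀ A ∈ S, IsRankOneMat A)
    (hspan : Submodule.span F
      (Set.range fun l : Fin m3 => (Matrix.of fun i j => T i j l : Matrix (Fin m1) (Fin m2) F))
      ≤ Submodule.span F S)
    (hd : Module.finrank F (Submodule.span F S) = d) :
    ∃ (x : Fin d → Fin m1 → F) (y : Fin d → Fin m2 → F) (z : Fin d → Fin m3 → F),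
      ∀ i j l, T i j l = ∑ s, x s i * y s j * z s l := by
  classical
  obtain ⟨b, hbS, hbspan, hbli⟩ := exists_linearIndependent F S
  have hbfin : b.Finite := hbli.setFinite
  have hfin : Fintype b := hbfin.fintype
  have hcard : b.toFinset.card = d := by
    rw [← hd, ← hbspan, finrank_span_set_eq_card hbli]
  set e : Fin d ≃ b.toFinset := (Finset.equivFinOfCardEq hcard).symm
  set B : Fin d → Matrix (Fin m1) (Fin m2) F := fun t => ((e t : b.toFinset) : _)
  have hrangeB : Set.range B = b := by
    ext A
    constructor
    · rintro ⟨t, rfl⟩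
      have := (e t).2
      rw [Set.mem_toFinset] at this
      exact this
    · intro hA
      refine ⟨e.symm ⟨A, Set.mem_toFinset.mpr hA⟩, ?_⟩
      simp [B]
  have hBS : ∀ t, B t ∈ S := by
    intro t
    apply hbS
    rw [← hrangeB]
    exact ⟨t, rfl⟩
  -- rank-one structure of each B t
  have huv : ∀ t, ∃ (u : Fin m1 → F) (v : Fin m2 → F), B t = Matrix.of fun i j => u i * v j := by
    intro t
    obtain ⟨u, v, -, -, h⟩ := hS1 _ (hBS t)
    exact ⟨u, v, h⟩
  choose u v hB using huv
  -- each slice is in span of range B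
  have hmem : ∀ l : Fin m3, ∃ c : Fin d → F,
      ∑ t, c t • B t = (Matrix.of fun i j => T i j l : Matrix (Fin m1) (Fin m2) F) := by
    intro l
    rw [← Submodule.mem_span_range_iff_exists_fun, hrangeB, hbspan]
    exact hspan (Submodule.subset_span ⟨l, rfl⟩)
  choose c hc using hmem
  refine ⟨u, v, fun t l => c l t, fun i j l => ?_⟩
  have := congrFun (congrFun (hc l) i) j
  simp only [Matrix.sum_apply, Matrix.smul_apply, Matrix.of_apply, smul_eq_mul] at this
  rw [← this]
  refine Finset.sum_congr rfl fun t _ => ?_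
  rw [hB t]
  simp only [Matrix.of_apply]
  ring

end Aux

theorem stmt_0 {F : Type*} [Field F] {m1 m2 m3 : ℕ}
    (T : Fin m1 → Fin m2 → Fin m3 → F) :
    trank T = sInf {d | ∃ (S : Set (Matrix (Fin m1) (Fin m2) F)),
      (∀ A ∈ S, IsRankOneMat A) ∧
      Submodule.span F
        (Set.range fun k : Fin m3 => (Matrix.of fun i j => T i j k : Matrix (Fin m1) (Fin m2) F))
        ≤ Submodule.span F S ∧
      Module.finrank F (Submodule.span F S) = d} := by
  classical
  have hLne := trank_set_nonempty T
  have hk := Nat.sInf_mem hLne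
  obtain ⟨x, y, z, hT⟩ := hk
  obtain ⟨d0, hd0le, S0, hS0⟩ := dir1 T x y z hT
  have hRne : {d | ∃ (S : Set (Matrix (Fin m1) (Fin m2) F)),
      (∀ A ∈ S, IsRankOneMat A) ∧
      Submodule.span F
        (Set.range fun k : Fin m3 => (Matrix.of fun i j => T i j k : Matrix (Fin m1) (Fin m2) F))
        ≤ Submodule.span F S ∧
      Module.finrank F (Submodule.span F S) = d}.Nonempty := ⟨d0, S0, hS0⟩
  apply le_antisymm
  · -- trank T ≤ sInf RHS
    obtain ⟨S, hS1, hspan, hd⟩ := Nat.sInf_mem hRne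
    obtain ⟨x', y', z', h⟩ := dir2 T S hS1 hspan hd
    exact Nat.sInf_le ⟨x', y', z', h⟩
  · -- sInf RHS ≤ trank T
    exact le_trans (Nat.sInf_le ⟨S0, hS0⟩) hd0le
end

section
/- Let A, B ∈ F^{m×m} with A invertible and A^{-1}B diagonalizable over F. Then there exist m rank-one matrices R_1, ..., R_m ∈ F^{m×m} such that both A and B lie in span(R_1, ..., R_m). Consequently the 3-tensor in F^{m×m×2} with slices A and B has rank at most m. -/
open Matrix
open scoped BigOperators

lemma rank_vecMulVec_one {F : Type*} [Field F] {m : ℕ} (w v : Fin m → F)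
    (hw : w ≠ 0) (hv : v ≠ 0) : (vecMulVec w v).rank = 1 := by
  have hr : LinearMap.range (vecMulVec w v).mulVecLin = Submodule.span F {w} := by
    apply le_antisymm
    · rintro _ ⟨x, rfl⟩
      simp only [mulVecLin_apply]
      have : (vecMulVec w v).mulVec x = (v ⬝ᵥ x) • w := by
        ext i
        simp [mulVec, vecMulVec, dotProduct, Finset.mul_sum, mul_assoc, mul_comm, mul_left_comm]
      rw [this]
      exact Submodule.smul_mem _ _ (Submodule.mem_span_singleton_self w)
    · rw [Submodule.span_le, Set.singleton_subset_iff]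
      obtain ⟨j, hj⟩ : ∃ j, v j ≠ 0 := by
        by_contra h; push_neg at h; exact hv (funext h)
      refine ⟨(v j)⁻¹ • (Pi.single j 1 : Fin m → F), ?_⟩
      ext i
      simp [mulVec, vecMulVec, dotProduct, Pi.single_apply, mul_ite, Finset.sum_ite_eq', hj]
      ring_nf
      field_simp
  rw [Matrix.rank, hr, finrank_span_singleton hw]

theorem stmt_14 {F : Type*} [Field F] {m : ℕ}
    (A B : Matrix (Fin m) (Fin m) F) (hA : IsUnit A)
    (hdiag : ∃ P : Matrix (Fin m) (Fin m) F, IsUnit P ∧ (P⁻¹ * (A⁻¹ * B) * P).IsDiag) :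
    (∃ R : Fin m → Matrix (Fin m) (Fin m) F,
      (∀ i, (R i).rank = 1) ∧
      A ∈ Submodule.span F (Set.range R) ∧ B ∈ Submodule.span F (Set.range R)) ∧
    (∀ T : Fin m → Fin m → Fin 2 → F,
      (∀ i j, T i j 0 = A i j ∧ T i j 1 = B i j) → trank T ≤ m) := by
  obtain ⟨P, hP, hD⟩ := hdiag
  set D := P⁻¹ * (A⁻¹ * B) * P with hDdef
  have hPdet : IsUnit P.det := (isUnit_iff_isUnit_det P).1 hP
  have hAdet : IsUnit A.det := (isUnit_iff_isUnit_det A).1 hA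
  have h1 : P * P⁻¹ = 1 := mul_nonsing_inv P hPdet
  have h2 : A * A⁻¹ = 1 := mul_nonsing_inv A hAdet
  -- key factorizations
  have hAfact : A = (A * P) * P⁻¹ := by rw [Matrix.mul_assoc, h1, Matrix.mul_one]
  have hBfact : B = ((A * P) * D) * P⁻¹ := by
    have : ((A * P) * D) * P⁻¹ = (A * (A⁻¹ * B)) * (P * P⁻¹) := by
      simp only [hDdef, Matrix.mul_assoc, Matrix.mul_nonsing_inv_cancel_left P _ hPdet]
    rw [this, h1, Matrix.mul_one, ← Matrix.mul_assoc, h2, Matrix.one_mul]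
  have hAentry : ∀ i j, A i j = ∑ s, (A * P) i s * P⁻¹ s j := by
    intro i j; conv_lhs => rw [hAfact]
    rw [Matrix.mul_apply]
  have hAPDentry : ∀ i s, ((A * P) * D) i s = (A * P) i s * D s s := by
    intro i s
    rw [Matrix.mul_apply]
    refine Finset.sum_eq_single s (fun t _ ht => ?_) (by simp)
    rw [hD ht, mul_zero]
  have hBentry : ∀ i j, B i j = ∑ s, (A * P) i s * D s s * P⁻¹ s j := by
    intro i j; conv_lhs => rw [hBfact]
    rw [Matrix.mul_apply]
    exact Finset.sum_congr rfl fun s _ => by rw [hAPDentry]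
  refine ⟨⟨fun s => vecMulVec (fun i => (A * P) i s) (fun j => P⁻¹ s j), ?_, ?_, ?_⟩, ?_⟩
  · intro s
    apply rank_vecMulVec_one
    · intro h
      have := det_eq_zero_of_column_eq_zero (A := A * P) s (fun i => congrFun h i)
      rw [det_mul] at this
      rcases mul_eq_zero.1 this with h' | h'
      · exact hAdet.ne_zero h'
      · exact hPdet.ne_zero h'
    · intro h
      have : P⁻¹.det = 0 := det_eq_zero_of_row_eq_zero s (fun j => congrFun h j)
      exact (P.isUnit_nonsing_inv_det hPdet).ne_zero this
  · have hsum : A = ∑ s, vecMulVec (fun i => (A * P) i s) (fun j => P⁻¹ s j) := by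
      ext i j
      rw [hAentry]
      simp [vecMulVec, Matrix.sum_apply]
    have h3 : (∑ s, vecMulVec (fun i => (A * P) i s) (fun j => P⁻¹ s j)) ∈
        Submodule.span F (Set.range fun s =>
          vecMulVec (fun i => (A * P) i s) (fun j => P⁻¹ s j)) :=
      Submodule.sum_mem _ fun s _ => Submodule.subset_span ⟨s, rfl⟩
    rwa [← hsum] at h3
  · have hsum : B = ∑ s, D s s • vecMulVec (fun i => (A * P) i s) (fun j => P⁻¹ s j) := by
      ext i j
      rw [hBentry]
      simp only [vecMulVec, Matrix.sum_apply, Matrix.smul_apply, Matrix.of_apply,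
        Pi.smul_apply, smul_eq_mul]
      exact Finset.sum_congr rfl fun s _ => by ring
    have h3 : (∑ s, D s s • vecMulVec (fun i => (A * P) i s) (fun j => P⁻¹ s j)) ∈
        Submodule.span F (Set.range fun s =>
          vecMulVec (fun i => (A * P) i s) (fun j => P⁻¹ s j)) :=
      Submodule.sum_mem _ fun s _ =>
        Submodule.smul_mem _ _ (Submodule.subset_span ⟨s, rfl⟩)
    rwa [← hsum] at h3
  · intro T hT
    apply Nat.sInf_le
    refine ⟨fun s i => (A * P) i s, fun s j => P⁻¹ s j, fun s => ![1, D s s], ?_⟩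
    intro i j l
    fin_cases l
    · show T i j 0 = ∑ s, (A * P) i s * P⁻¹ s j * (![1, D s s] : Fin 2 → F) 0
      rw [(hT i j).1, hAentry]
      simp
    · show T i j 1 = ∑ s, (A * P) i s * P⁻¹ s j * (![1, D s s] : Fin 2 → F) 1
      rw [(hT i j).2, hBentry]
      simp [mul_comm, mul_left_comm, mul_assoc]
end

section
/- For every m ≥ 2 there exists an (m−1)²+1-dimensional subspace L of R^{m×m} consisting of trace-zero matrices that contains no rank-one matrix. (For m = 2, 3 one may take all trace-zero matrices when (m−1)²+1 equals the relevant dimension; in general L = S_{m,0} + L_1 where S_{m,0} is the trace-zero symmetric matrices and L_1 ⊂ A_m(R) is a subspace of skew-symmetric matrices of dimension C(m−2, 2) containing no nonzero matrix of rank ≤ 2.) -/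
open Matrix Finset

/-- weight coefficients: component 0 is the trace, component `k ≥ 1` is the
`k`-th Wronskian coefficient `∑_{i+j=k} (j - i) A i j`. -/
noncomputable def stmt18c (m : ℕ) (k : Fin (2*m-2)) (i j : Fin m) : ℝ :=
  if (k : ℕ) = 0 then (if i = j then 1 else 0)
  else (if (i : ℕ) + (j : ℕ) = (k : ℕ) then ((j : ℕ) : ℝ) - ((i : ℕ) : ℝ) else 0)

noncomputable def stmt18Phi (m : ℕ) :
    Matrix (Fin m) (Fin m) ℝ →ₗ[ℝ] (Fin (2*m-2) → ℝ) where
  toFun A := fun k => ∑ i : Fin m, ∑ j : Fin m, stmt18c m k i j * A i j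
  map_add' A B := by
    funext k
    simp [Matrix.add_apply, mul_add, Finset.sum_add_distrib]
  map_smul' c A := by
    funext k
    simp [Matrix.smul_apply, smul_eq_mul, Finset.mul_sum, mul_left_comm]

lemma stmt18Phi_std (m : ℕ) (a b : Fin m) (k : Fin (2*m-2)) :
    stmt18Phi m (Matrix.single a b 1) k = stmt18c m k a b := by
  simp only [stmt18Phi, LinearMap.coe_mk, AddHom.coe_mk]
  rw [Finset.sum_eq_single a, Finset.sum_eq_single b]
  · simp [Matrix.single]
  · intro j _ hj
    simp [Matrix.single, hj.symm]
  · simp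
  · intro i _ hi
    apply Finset.sum_eq_zero
    intro j _
    simp [Matrix.single, hi.symm]
  · simp

lemma stmt18Phi_surj (m : ℕ) (hm : 2 ≤ m) : Function.Surjective (stmt18Phi m) := by
  rw [← LinearMap.range_eq_top, ← top_le_iff, ← (Pi.basisFun ℝ (Fin (2*m-2))).span_eq,
    Submodule.span_le]
  rintro _ ⟨k, rfl⟩
  rw [Pi.basisFun_apply]
  by_cases hk : (k : ℕ) = 0
  · -- trace component: use E₀₀
    refine ⟨Matrix.single ⟨0, by omega⟩ ⟨0, by omega⟩ 1, ?_⟩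
    funext k'
    rw [stmt18Phi_std]
    by_cases h : k' = k
    · subst h
      simp [stmt18c, hk, Pi.single_apply]
    · have hk' : (k' : ℕ) ≠ 0 := by
        intro h0; exact h (Fin.ext (h0.trans hk.symm))
      simp [stmt18c, hk', Pi.single_apply, h]
  · -- Wronskian coefficient s = k
    have hs1 : 1 ≤ (k : ℕ) := Nat.one_le_iff_ne_zero.mpr hk
    have hs2 : (k : ℕ) ≤ 2*m - 3 := by have := k.isLt; omega
    -- choose indices a b with a + b = k, a < b
    obtain ⟨a, b, hab, hlt⟩ :
        ∃ a b : Fin m, (a : ℕ) + (b : ℕ) = (k : ℕ) ∧ (a : ℕ) < (b : ℕ) := by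
      by_cases h : (k : ℕ) < m
      · exact ⟨⟨0, by omega⟩, ⟨(k : ℕ), h⟩, by simp, by simp; omega⟩
      · exact ⟨⟨(k : ℕ) - m + 1, by omega⟩, ⟨m - 1, by omega⟩, by simp; omega, by simp; omega⟩
    set w : ℝ := ((b : ℕ) : ℝ) - ((a : ℕ) : ℝ) with hw
    have hwpos : (0 : ℝ) < w := by
      rw [hw]; rw [sub_pos]; exact_mod_cast hlt
    refine ⟨w⁻¹ • Matrix.single a b 1, ?_⟩
    rw [_root_.map_smul]
    funext k'
    rw [Pi.smul_apply, stmt18Phi_std]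
    by_cases h : k' = k
    · subst h
      rw [stmt18c, if_neg hk, if_pos hab, Pi.single_apply, if_pos rfl, ← hw]
      rw [smul_eq_mul, inv_mul_cancel₀ hwpos.ne']
    · have hk'' : ¬ ((a:ℕ) + (b:ℕ) = (k' : ℕ)) := by
        rw [hab]; intro h0; exact h (Fin.ext h0.symm)
      by_cases hk0 : (k' : ℕ) = 0
      · have : a ≠ b := by intro h0; rw [h0] at hlt; omega
        simp [stmt18c, hk0, this, Pi.single_apply, h]
      · simp [stmt18c, hk0, hk'', Pi.single_apply, h]

noncomputable def stmt18B (m : ℕ) (s : ℕ) (u v : Fin m → ℝ) : ℝ :=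
  ∑ i : Fin m, ∑ j : Fin m,
    (if (i : ℕ) + (j : ℕ) = s then ((j : ℕ) : ℝ) - ((i : ℕ) : ℝ) else 0) * (u i * v j)

lemma stmt18B_self (m : ℕ) (s : ℕ) (u : Fin m → ℝ) : stmt18B m s u u = 0 := by
  have hswap : stmt18B m s u u = ∑ i : Fin m, ∑ j : Fin m,
      (if (j : ℕ) + (i : ℕ) = s then ((i : ℕ) : ℝ) - ((j : ℕ) : ℝ) else 0) * (u j * u i) := by
    unfold stmt18B
    rw [Finset.sum_comm]
  have h : stmt18B m s u u + stmt18B m s u u = 0 := by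
    nth_rewrite 2 [hswap]
    unfold stmt18B
    rw [← Finset.sum_add_distrib]
    apply Finset.sum_eq_zero
    intro i _
    rw [← Finset.sum_add_distrib]
    apply Finset.sum_eq_zero
    intro j _
    by_cases hij : (i : ℕ) + (j : ℕ) = s
    · rw [if_pos hij, if_pos (by omega : (j:ℕ) + (i:ℕ) = s)]; ring
    · rw [if_neg hij, if_neg (by omega : ¬ ((j:ℕ) + (i:ℕ) = s))]; ring
  linarith

lemma stmt18_min (m : ℕ) (u v : Fin m → ℝ) (tu tv : Fin m)
    (hu : u tu ≠ 0) (hv : v tv ≠ 0)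
    (hu' : ∀ i : Fin m, (i : ℕ) < (tu : ℕ) → u i = 0)
    (hv' : ∀ j : Fin m, (j : ℕ) < (tv : ℕ) → v j = 0)
    (h : stmt18B m ((tu : ℕ) + (tv : ℕ)) u v = 0) : (tu : ℕ) = (tv : ℕ) := by
  set s := (tu : ℕ) + (tv : ℕ)
  have key : stmt18B m s u v = (((tv : ℕ) : ℝ) - ((tu : ℕ) : ℝ)) * (u tu * v tv) := by
    unfold stmt18B
    rw [Finset.sum_eq_single tu]
    · rw [Finset.sum_eq_single tv]
      · rw [if_pos rfl]
      · intro j _ hj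
        by_cases hij : (tu : ℕ) + (j : ℕ) = s
        · have : (j : ℕ) = (tv : ℕ) := by omega
          exact absurd (Fin.ext this) hj
        · rw [if_neg hij]; ring
      · intro habs; exact absurd (Finset.mem_univ tv) habs
    · intro i _ hi
      apply Finset.sum_eq_zero
      intro j _
      by_cases hij : (i : ℕ) + (j : ℕ) = s
      · rcases lt_or_gt_of_ne (fun h0 => hi (Fin.ext h0) : (i : ℕ) ≠ (tu : ℕ)) with hlt | hgt
        · rw [hu' i hlt]; ring
        · rw [hv' j (by omega)]; ring
      · rw [if_neg hij]; ring
    · intro habs; exact absurd (Finset.mem_univ tu) habs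
  rw [h] at key
  rcases mul_eq_zero.mp key.symm with h1 | h2
  · have : ((tv : ℕ) : ℝ) = ((tu : ℕ) : ℝ) := by linarith [sub_eq_zero.mp h1]
    exact_mod_cast this.symm
  · exact absurd (mul_eq_zero.mp h2) (by tauto)

lemma stmt18_prop (m : ℕ) (u v : Fin m → ℝ) (hu : u ≠ 0)
    (h : ∀ s : ℕ, stmt18B m s u v = 0) : ∃ c : ℝ, v = c • u := by
  by_cases hv : v = 0
  · exact ⟨0, by simp [hv]⟩
  -- minimal support indices
  have hTu : (Finset.univ.filter (fun i => u i ≠ 0)).Nonempty := by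
    rcases Function.ne_iff.mp hu with ⟨i, hi⟩
    have hi' : u i ≠ 0 := by simpa using hi
    exact ⟨i, by simp [hi']⟩
  have hTv : (Finset.univ.filter (fun i => v i ≠ 0)).Nonempty := by
    rcases Function.ne_iff.mp hv with ⟨i, hi⟩
    have hi' : v i ≠ 0 := by simpa using hi
    exact ⟨i, by simp [hi']⟩
  set tu := (Finset.univ.filter (fun i => u i ≠ 0)).min' hTu with htu
  set tv := (Finset.univ.filter (fun i => v i ≠ 0)).min' hTv with htv
  have hutu : u tu ≠ 0 := by
    have := Finset.min'_mem _ hTu; simpa using this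
  have hvtv : v tv ≠ 0 := by
    have := Finset.min'_mem _ hTv; simpa using this
  have hu' : ∀ i : Fin m, (i : ℕ) < (tu : ℕ) → u i = 0 := by
    intro i hi
    by_contra hne
    have : tu ≤ i := Finset.min'_le _ _ (by simp [hne])
    exact absurd hi (by omega)
  have hv' : ∀ j : Fin m, (j : ℕ) < (tv : ℕ) → v j = 0 := by
    intro j hj
    by_contra hne
    have : tv ≤ j := Finset.min'_le _ _ (by simp [hne])
    exact absurd hj (by omega)
  have hmin : (tu : ℕ) = (tv : ℕ) :=
    stmt18_min m u v tu tv hutu hvtv hu' hv' (h _)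
  have htveq : tv = tu := Fin.ext hmin.symm
  -- the combination w
  set w : Fin m → ℝ := fun i => v tu * u i - u tu * v i with hwdef
  have hBw : ∀ s : ℕ, stmt18B m s u w = 0 := by
    intro s
    have expand : stmt18B m s u w
        = v tu * stmt18B m s u u - u tu * stmt18B m s u v := by
      unfold stmt18B
      rw [Finset.mul_sum, Finset.mul_sum, ← Finset.sum_sub_distrib]
      apply Finset.sum_congr rfl
      intro i _
      rw [Finset.mul_sum, Finset.mul_sum, ← Finset.sum_sub_distrib]
      apply Finset.sum_congr rfl
      intro j _
      by_cases hij : (i : ℕ) + (j : ℕ) = s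
      · rw [if_pos hij]; simp only [hwdef]; ring
      · rw [if_neg hij]; ring
    rw [expand, stmt18B_self, h s]; ring
  have hw0 : w = 0 := by
    by_contra hwne
    have hTw : (Finset.univ.filter (fun i => w i ≠ 0)).Nonempty := by
      rcases Function.ne_iff.mp hwne with ⟨i, hi⟩
      have hi' : w i ≠ 0 := by simpa using hi
      exact ⟨i, by simp [hi']⟩
    set tw := (Finset.univ.filter (fun i => w i ≠ 0)).min' hTw with htw
    have hwtw : w tw ≠ 0 := by
      have := Finset.min'_mem _ hTw; simpa using this
    have hw' : ∀ i : Fin m, (i : ℕ) < (tw : ℕ) → w i = 0 := by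
      intro i hi
      by_contra hne
      have : tw ≤ i := Finset.min'_le _ _ (by simp [hne])
      exact absurd hi (by omega)
    have hmin2 : (tu : ℕ) = (tw : ℕ) :=
      stmt18_min m u w tu tw hutu hwtw hu' hw' (hBw _)
    -- but w vanishes up to and including tu
    have hwle : ∀ i : Fin m, (i : ℕ) ≤ (tu : ℕ) → w i = 0 := by
      intro i hi
      rcases Nat.lt_or_ge (i : ℕ) (tu : ℕ) with hlt | hge
      · simp only [hwdef]
        rw [hu' i hlt, hv' i (by omega)]; ring
      · have : i = tu := Fin.ext (by omega)
        rw [this]; simp only [hwdef]; ring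
    exact hwtw (hwle tw (by omega))
  refine ⟨v tu / u tu, ?_⟩
  funext i
  have hwi : v tu * u i - u tu * v i = 0 := by
    have := congrFun hw0 i; simpa [hwdef] using this
  have : v i = v tu / u tu * u i := by
    field_simp
    linarith
  simpa [Pi.smul_apply, smul_eq_mul] using this

theorem stmt_18 (m : ℕ) (hm : 2 ≤ m) :
    ∃ L : Submodule ℝ (Matrix (Fin m) (Fin m) ℝ),
      Module.finrank ℝ L = (m - 1) ^ 2 + 1 ∧
      (∀ A ∈ L, A.trace = 0) ∧
      (∀ A ∈ L, A.rank ≠ 1) := by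
  have hm0 : 0 < 2*m - 2 := by omega
  have htr : ∀ B ∈ LinearMap.ker (stmt18Phi m), Matrix.trace B = 0 := by
    intro B hB
    have h0 := congrFun (LinearMap.mem_ker.mp hB) ⟨0, hm0⟩
    have he : stmt18Phi m B ⟨0, hm0⟩ = Matrix.trace B := by
      simp only [stmt18Phi, LinearMap.coe_mk, AddHom.coe_mk, stmt18c]
      rw [Matrix.trace]
      simp [Matrix.diag, ite_mul, Finset.sum_ite_eq, one_mul, zero_mul]
    rw [← he]
    simpa using h0
  refine ⟨LinearMap.ker (stmt18Phi m), ?_, htr, ?_⟩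
  · have h1 := LinearMap.finrank_range_add_finrank_ker (stmt18Phi m)
    rw [LinearMap.range_eq_top.mpr (stmt18Phi_surj m hm), finrank_top] at h1
    rw [Module.finrank_pi, Module.finrank_matrix] at h1
    simp only [Fintype.card_fin, Module.finrank_self, mul_one] at h1
    have h2 : (m - 1) ^ 2 = (m - 1) * (m - 1) := sq (m - 1)
    have h3 : m * m = (m - 1) * (m - 1) + 2 * m - 1 := by
      obtain ⟨k, rfl⟩ := Nat.exists_eq_add_of_le hm
      have e1 : 2 + k - 1 = k + 1 := by omega
      rw [e1]
      have e2 : (k + 1) * (k + 1) + 2 * (2 + k) - 1 = (k + 1) * (k + 1) + (2 * k + 3) := by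
        omega
      rw [e2]
      ring
    omega
  · intro A hA hrank
    have hr : Module.finrank ℝ (LinearMap.range A.mulVecLin) = 1 := hrank
    obtain ⟨u0, hu0ne, hspan⟩ := finrank_eq_one_iff'.mp hr
    set u : Fin m → ℝ := (u0 : Fin m → ℝ) with hudef
    have hune : u ≠ 0 := fun h => hu0ne (Subtype.ext h)
    have hcol : ∀ j : Fin m, ∃ c : ℝ, c • u = fun i => A i j := by
      intro j
      obtain ⟨c, hc⟩ := hspan ⟨A *ᵥ Pi.single j 1, LinearMap.mem_range_self _ _⟩
      refine ⟨c, ?_⟩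
      have h2 := congrArg Subtype.val hc
      simp only [Matrix.mulVec_single, mul_one, MulOpposite.op_one, one_smul] at h2
      exact h2
    choose v hv using hcol
    have hAij : ∀ i j, A i j = u i * v j := by
      intro i j
      have h3 := congrFun (hv j) i
      simp only [Pi.smul_apply, smul_eq_mul] at h3
      rw [← h3]; ring
    have hvne : v ≠ 0 := by
      intro h0
      have hA0 : A = 0 := by
        ext i j; rw [hAij, h0]; simp
      rw [hA0, Matrix.rank_zero] at hrank
      exact absurd hrank (by norm_num)
    have hmem := LinearMap.mem_ker.mp hA
    have hB : ∀ s : ℕ, stmt18B m s u v = 0 := by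
      intro s
      by_cases hs : 1 ≤ s ∧ s ≤ 2*m - 3
      · have hks : s < 2*m - 2 := by omega
        have heq : stmt18B m s u v = stmt18Phi m A ⟨s, hks⟩ := by
          show _ = ∑ i : Fin m, ∑ j : Fin m, stmt18c m ⟨s, hks⟩ i j * A i j
          unfold stmt18B stmt18c
          apply Finset.sum_congr rfl
          intro i _
          apply Finset.sum_congr rfl
          intro j _
          rw [hAij i j, if_neg (show ¬ ((⟨s, hks⟩ : Fin (2*m-2)) : ℕ) = 0 by
            simp only [Fin.val_mk]; omega)]
        rw [heq, hmem]
        simp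
      · unfold stmt18B
        apply Finset.sum_eq_zero
        intro i _
        apply Finset.sum_eq_zero
        intro j _
        by_cases hij : (i : ℕ) + (j : ℕ) = s
        · have hi := i.isLt
          have hj := j.isLt
          have hij2 : (i : ℕ) = (j : ℕ) := by omega
          rw [if_pos hij, hij2, sub_self, zero_mul]
        · rw [if_neg hij, zero_mul]
    obtain ⟨c, hc⟩ := stmt18_prop m u v hune hB
    have hcne : c ≠ 0 := by
      intro h0; rw [h0] at hc; simp at hc; exact hvne hc
    have htrA : Matrix.trace A = 0 := htr A hA
    have htr2 : Matrix.trace A = c * ∑ i, u i ^ 2 := by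
      rw [Matrix.trace, Finset.mul_sum]
      apply Finset.sum_congr rfl
      intro i _
      simp only [Matrix.diag]
      rw [hAij i i, congrFun hc i]
      simp only [Pi.smul_apply, smul_eq_mul]
      ring
    have hsum : ∑ i, u i ^ 2 = 0 := by
      rw [htrA] at htr2
      exact (mul_eq_zero.mp htr2.symm).resolve_left hcne
    have hzero : ∀ i ∈ Finset.univ, u i ^ 2 = 0 :=
      (Finset.sum_eq_zero_iff_of_nonneg (fun i _ => sq_nonneg (u i))).mp hsum
    apply hune
    funext i
    exact pow_eq_zero_iff (n := 2) (by norm_num) |>.mp (hzero i (Finset.mem_univ i))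
end
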